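/- Let Qmax denote the commutative semiring whose carrier is the non-negative rationals ℚ≥0, with addition given by maximum, multiplication given by ordinary multiplication of rationals, additive identity 0, and multiplicative identity 1. Then the Qmax-semimodule Qmax ⊕ Qmax (pairs of non-negative rationals with componentwise maximum as addition and componentwise scalar multiplication) has infinite length: for every r ∈ ℕ there is a strictly increasing chain of r+1 subsemimodules of Qmax ⊕ Qmax. Explicitly, setting uᵢ = ⟨i, 1⟩ and Mᵢ the subsemimodule generated by {u₀, …, uᵢ}, the chain M₀ ⊊ M₁ ⊊ M₂ ⊊ ⋯ is an infinite strictly increasing chain. -/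

import Mathlib

/-- The length of an `S`-semimodule `M`: the supremum of all `r : ℕ` such that there exists a
strictly increasing chain `M₀ ⊊ M₁ ⊊ ⋯ ⊊ M_r` of subsemimodules (i.e. `S`-submodules) of `M`. -/
noncomputable def semimoduleLength (S M : Type*) [Semiring S] [AddCommMonoid M]
    [Module S M] : ℕ∞ :=
  ⨆ r : {r : ℕ // ∃ c : Fin (r + 1) → Submodule S M, StrictMono c}, ((r : ℕ) : ℕ∞)

/-- The semiring `Qmax`: carrier the non-negative rationals, addition is `max`,
multiplication is ordinary multiplication. -/
def Qmax : Type := NNRat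

/-- View an element of `Qmax` as a non-negative rational (the identity on carriers). -/
def Qmax.toNN : Qmax → NNRat := id

/-- View a non-negative rational as an element of `Qmax` (the identity on carriers). -/
def Qmax.mk : NNRat → Qmax := id

namespace Qmax

instance : Add Qmax := ⟨fun a b => mk (max (toNN a) (toNN b))⟩
instance : Mul Qmax := ⟨fun a b => mk (toNN a * toNN b)⟩
instance : Zero Qmax := ⟨mk 0⟩
instance : One Qmax := ⟨mk 1⟩

instance : CommSemiring Qmax where
  add a b := a + b
  add_assoc a b c := congrArg mk (max_assoc (toNN a) (toNN b) (toNN c))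
  zero := 0
  zero_add a := congrArg mk (max_eq_right ((zero_le : 0 ≤ toNN a)))
  add_zero a := congrArg mk (max_eq_left ((zero_le : 0 ≤ toNN a)))
  add_comm a b := congrArg mk (max_comm (toNN a) (toNN b))
  nsmul := nsmulRec
  mul a b := a * b
  left_distrib a b c :=
    congrArg mk ((monotone_mul_left_of_nonneg ((zero_le : 0 ≤ toNN a))).map_max)
  right_distrib a b c :=
    congrArg mk ((monotone_mul_right_of_nonneg ((zero_le : 0 ≤ toNN c))).map_max)
  zero_mul a := congrArg mk (zero_mul (toNN a))
  mul_zero a := congrArg mk (mul_zero (toNN a))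
  mul_assoc a b c := congrArg mk (mul_assoc (toNN a) (toNN b) (toNN c))
  npow := npowRec
  one := 1
  one_mul a := congrArg mk (one_mul (toNN a))
  mul_one a := congrArg mk (mul_one (toNN a))
  mul_comm a b := congrArg mk (mul_comm (toNN a) (toNN b))

end Qmax

namespace QmaxAux

lemma toNN_add (a b : Qmax) : Qmax.toNN (a + b) = Qmax.toNN a ⊔ Qmax.toNN b := rfl

lemma toNN_mul (a b : Qmax) : Qmax.toNN (a * b) = Qmax.toNN a * Qmax.toNN b := rfl

lemma toNN_sum {ι : Type*} (s : Finset ι) (g : ι → Qmax) :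
    Qmax.toNN (∑ j ∈ s, g j) = s.sup (fun j => Qmax.toNN (g j)) := by
  classical
  induction s using Finset.induction_on with
  | empty => rfl
  | insert _ _ h ih => rw [Finset.sum_insert h, Finset.sup_insert, ← ih, toNN_add]

noncomputable def gen (j : ℕ) : Qmax × Qmax := (Qmax.mk (j : NNRat), Qmax.mk (1 : NNRat))

lemma key (i : ℕ) :
    (gen (i + 1)) ∉ Submodule.span Qmax ((fun j : ℕ => gen j) '' {j | j ≤ i}) := by
  intro hmem
  rw [Submodule.mem_span_set] at hmem
  obtain ⟨c, hsupp, hsum⟩ := hmem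
  have hfst : Qmax.toNN ((c.sum fun mi r => r • mi).1)
      = c.support.sup (fun p => Qmax.toNN (c p) * Qmax.toNN p.1) := by
    rw [Finsupp.sum, Prod.fst_sum, toNN_sum]
    rfl
  have hsnd : Qmax.toNN ((c.sum fun mi r => r • mi).2)
      = c.support.sup (fun p => Qmax.toNN (c p) * Qmax.toNN p.2) := by
    rw [Finsupp.sum, Prod.snd_sum, toNN_sum]
    rfl
  rw [hsum] at hfst hsnd
  -- every coefficient is ≤ 1
  have hc : ∀ p ∈ c.support, Qmax.toNN (c p) ≤ 1 := by
    intro p hp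
    have := Finset.le_sup (f := fun p => Qmax.toNN (c p) * Qmax.toNN p.2) hp
    rw [← hsnd] at this
    obtain ⟨j, hj, rfl⟩ := hsupp hp
    have h1 : Qmax.toNN (gen j).2 = 1 := rfl
    have h2 : Qmax.toNN (gen (i + 1)).2 = 1 := rfl
    rw [h1, h2, mul_one] at this
    exact this
  have hle : c.support.sup (fun p => Qmax.toNN (c p) * Qmax.toNN p.1) ≤ (i : NNRat) := by
    apply Finset.sup_le
    intro p hp
    obtain ⟨j, hj, rfl⟩ := hsupp hp
    calc Qmax.toNN (c (gen j)) * Qmax.toNN (gen j).1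
        ≤ 1 * (j : NNRat) := by
          exact mul_le_mul' (hc _ hp) le_rfl
      _ ≤ (i : NNRat) := by
          rw [one_mul]
          exact_mod_cast hj
  rw [← hfst] at hle
  have : ((i : NNRat) + 1) ≤ (i : NNRat) := by
    simp only [gen, Qmax.toNN, Qmax.mk, Nat.cast_add, id] at hle
    exact hle
  exact absurd this (by simp)

lemma chain_mono :
    StrictMono (fun i : ℕ => Submodule.span Qmax ((fun j : ℕ => gen j) '' {j | j ≤ i})) := by
  apply strictMono_nat_of_lt_succ
  intro i
  rw [SetLike.lt_iff_le_and_exists]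
  refine ⟨Submodule.span_mono (Set.image_mono fun j hj => le_trans hj (Nat.le_succ i)), gen (i+1),
    Submodule.subset_span ⟨i + 1, Set.mem_setOf.2 le_rfl, rfl⟩, key i⟩

end QmaxAux


/-- `Qmax ⊕ Qmax` has infinite length; explicitly, with `uᵢ = ⟨i, 1⟩` and `Mᵢ` the
subsemimodule generated by `{u₀, …, uᵢ}`, the chain `M₀ ⊊ M₁ ⊊ ⋯` is strictly increasing. -/
theorem qmax_prod_length_eq_top :
    semimoduleLength Qmax (Qmax × Qmax) = ⊤ ∧
    StrictMono (fun i : ℕ => Submodule.span Qmax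
      ((fun j : ℕ => ((Qmax.mk (j : NNRat), Qmax.mk (1 : NNRat)) : Qmax × Qmax)) '' {j | j ≤ i})) := by
  have hmono := QmaxAux.chain_mono
  refine ⟨?_, hmono⟩
  have hge : ∀ r : ℕ, (r : ℕ∞) ≤ semimoduleLength Qmax (Qmax × Qmax) := by
    intro r
    exact le_iSup_of_le ⟨r, fun k => Submodule.span Qmax
        ((fun j : ℕ => QmaxAux.gen j) '' {j | j ≤ (k : ℕ)}),
        hmono.comp Fin.val_strictMono⟩ le_rfl
  by_contra h
  obtain ⟨n, hn⟩ : ∃ n : ℕ, semimoduleLength Qmax (Qmax × Qmax) = n := by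
    lift semimoduleLength Qmax (Qmax × Qmax) to ℕ using h with n
    exact ⟨n, rfl⟩
  have := hge (n + 1)
  rw [hn] at this
  exact absurd this (by exact_mod_cast Nat.not_succ_le_self n)
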